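/- Let T_i and T = τ_φ(T_1,...,T_n) be the lifetime of component i and of a coherent system with independent component lifetimes, with survival function bar F_i(t) = P(T_i > t) for T_i. Then for every fixed t ≥ 0, the function s ↦ Cov(1_{T_i>s}, 1_{T>t}) on [0,∞) attains its maximum at s = t; consequently sup_{s,t≥0} Cov(1_{T_i>s}, 1_{T>t}) = sup_{t≥0} Cov(1_{T_i>t}, 1_{T>t}). -/

import Mathlib

open MeasureTheory ProbabilityTheory

noncomputable def cov {Ω : Type*} [MeasurableSpace Ω] (μ : Measure Ω) (U V : Ω → ℝ) : ℝ :=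
  (∫ ω, U ω * V ω ∂μ) - (∫ ω, U ω ∂μ) * (∫ ω, V ω ∂μ)

def Coherent {n : ℕ} (φ : (Fin n → Bool) → Bool) : Prop :=
  Monotone φ ∧ ∀ i : Fin n, ∃ x, φ (Function.update x i true) ≠ φ (Function.update x i false)

/-- The system lifetime of the coherent structure `φ` with component lifetimes `t`:
the last instant at which the system is still functioning. For coherent `φ` and
nonnegative `t` this equals `max_{path sets P} min_{i ∈ P} t i`. -/
noncomputable def tau {n : ℕ} (φ : (Fin n → Bool) → Bool) (t : Fin n → ℝ) : ℝ :=
  sSup {s : ℝ | φ (fun i => decide (s < t i)) = true}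

/-- Survival indicator `1_{s < U}` of a lifetime `U`. -/
noncomputable def ind {Ω : Type*} (U : Ω → ℝ) (s : ℝ) : Ω → ℝ :=
  fun ω => if s < U ω then 1 else 0

lemma coh_bot_top {n : ℕ} (φ : (Fin n → Bool) → Bool) (hφ : Coherent φ) (i : Fin n) :
    φ (fun _ => false) = false ∧ φ (fun _ => true) = true := by
  obtain ⟨hmono, hrel⟩ := hφ
  obtain ⟨x, hx⟩ := hrel i
  have h01 : φ (Function.update x i false) ≤ φ (Function.update x i true) := by
    apply hmono
    intro k
    by_cases hk : k = i
    · subst hk; simp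
    · simp [Function.update_of_ne hk]
  have h0 : φ (Function.update x i false) = false := by
    cases hf : φ (Function.update x i false) <;> cases ht : φ (Function.update x i true) <;>
      simp_all <;> exact absurd h01 (by decide)
  have h1 : φ (Function.update x i true) = true := by
    cases ht : φ (Function.update x i true) <;> simp_all
  constructor
  · have : φ (fun _ => false) ≤ φ (Function.update x i false) := by
      apply hmono; intro k; exact Bool.false_le _
    cases hf : φ (fun _ => false) <;> simp_all
    exact absurd this (by decide)
  · have : φ (Function.update x i true) ≤ φ (fun _ => true) := by
      apply hmono; intro k; exact Bool.le_true _
    cases hf : φ (fun _ => true) <;> simp_all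
    exact absurd this (by decide)

lemma tau_gt {n : ℕ} (φ : (Fin n → Bool) → Bool) (hφ : Coherent φ) (i : Fin n)
    (u : Fin n → ℝ) (hu : ∀ k, 0 ≤ u k) (t : ℝ) (ht : 0 ≤ t) :
    t < tau φ u ↔ φ (fun k => decide (t < u k)) = true := by
  obtain ⟨hbot, htop⟩ := coh_bot_top φ hφ i
  set S := {s : ℝ | φ (fun k => decide (s < u k)) = true} with hS
  have hne : S.Nonempty := by
    refine ⟨-1, ?_⟩
    have : (fun k => decide ((-1:ℝ) < u k)) = (fun _ => true) := by
      funext k; simp; linarith [hu k]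
    simp only [hS, Set.mem_setOf_eq, this, htop]
  have hbdd : BddAbove S := by
    obtain ⟨M, hM⟩ := Finite.exists_le u
    refine ⟨M, fun s hs => ?_⟩
    by_contra hMs
    push_neg at hMs
    have : (fun k => decide (s < u k)) = (fun _ => false) := by
      funext k; simp; linarith [hM k]
    simp only [hS, Set.mem_setOf_eq, this, hbot] at hs
    exact Bool.false_ne_true hs
  rw [tau, lt_csSup_iff hbdd hne]
  constructor
  · rintro ⟨s, hs, hts⟩
    have hmono := hφ.1
    have : (fun k => decide (s < u k)) ≤ (fun k => decide (t < u k)) := by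
      intro k
      by_cases h : s < u k
      · have : t < u k := lt_trans hts h
        simp [h, this]
      · simp [h]
    have := hmono this
    simp only [hS, Set.mem_setOf_eq] at hs
    rw [hs] at this
    cases hb : φ (fun k => decide (t < u k))
    · rw [hb] at this; exact absurd this (by decide)
    · rfl
  · intro hφt
    have hF : ∃ k, t < u k := by
      by_contra h
      push_neg at h
      have : (fun k => decide (t < u k)) = (fun _ => false) := by
        funext k; simp; exact h k
      rw [this, hbot] at hφt; exact Bool.false_ne_true hφt
    obtain ⟨k0, hk0⟩ := hF
    have hFne : (Finset.univ.filter (fun k => t < u k)).Nonempty :=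
      ⟨k0, by simp [hk0]⟩
    set m := (Finset.univ.filter (fun k => t < u k)).inf' hFne u with hm
    have htm : t < m := by
      rw [hm, Finset.lt_inf'_iff]
      intro b hb; simp at hb; exact hb
    refine ⟨(t + m) / 2, ?_, by linarith⟩
    have heq : (fun k => decide ((t+m)/2 < u k)) = (fun k => decide (t < u k)) := by
      funext k
      by_cases h : t < u k
      · have : m ≤ u k := by
          rw [hm]; exact Finset.inf'_le _ (by simp [h])
        simp [h]; linarith
      · push_neg at h
        have h2 : ¬ ((t+m)/2 < u k) := by push_neg; linarith
        simp [h, h2]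
    simp only [hS, Set.mem_setOf_eq, heq]
    exact hφt

lemma key_cov {Ω : Type*} [MeasurableSpace Ω] (μ : Measure Ω) [IsProbabilityMeasure μ]
    {n : ℕ} (T : Fin n → Ω → ℝ) (hmeas : ∀ i, Measurable (T i))
    (hnn : ∀ i ω, 0 ≤ T i ω)
    (hindep : iIndepFun T μ)
    (φ : (Fin n → Bool) → Bool) (hφ : Coherent φ) (i : Fin n)
    (t : ℝ) (ht : 0 ≤ t) :
    ∃ d : ℝ, 0 ≤ d ∧ d ≤ 1 ∧ ∀ s : ℝ,
      cov μ (ind (T i) s) (ind (fun ω => tau φ fun k => T k ω) t) =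
      d * ((μ {ω | max s t < T i ω}).toReal -
        (μ {ω | s < T i ω}).toReal * (μ {ω | t < T i ω}).toReal) := by
  classical
  -- basic measurability
  have hdec : Measurable fun r : ℝ => decide (t < r) := by
    apply measurable_to_countable'
    intro b
    cases b
    · have : (fun r : ℝ => decide (t < r)) ⁻¹' {false} = Set.Iic t := by
        ext r; simp [decide_eq_false_iff_not, not_lt]
      rw [this]; exact measurableSet_Iic
    · have : (fun r : ℝ => decide (t < r)) ⁻¹' {true} = Set.Ioi t := by
        ext r; simp
      rw [this]; exact measurableSet_Ioi
  set vec : Ω → Fin n → Bool := fun ω k => decide (t < T k ω) with hvec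
  -- the sets
  set A : ℝ → Set Ω := fun s => {ω | s < T i ω} with hA
  set H0 : Set Ω := {ω | φ (Function.update (vec ω) i false) = true} with hH0
  set D : Set Ω := {ω | φ (Function.update (vec ω) i true) = true ∧
      φ (Function.update (vec ω) i false) = false} with hD
  have hAmeas : ∀ s, MeasurableSet (A s) := fun s => (hmeas i) measurableSet_Ioi
  -- independence setup
  set Y : Ω → (({i}ᶜ : Finset (Fin n)) → ℝ) := fun ω j => T j ω with hY
  set X : Ω → (({i} : Finset (Fin n)) → ℝ) := fun ω j => T j ω with hX
  have hIF : IndepFun X Y μ :=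
    hindep.indepFun_finset {i} {i}ᶜ disjoint_compl_right hmeas
  -- express H0 and D as preimages under Y
  set g : Bool → (({i}ᶜ : Finset (Fin n)) → ℝ) → Bool := fun b v =>
    φ (fun k => if h : k ∈ ({i}ᶜ : Finset (Fin n)) then decide (t < v ⟨k, h⟩) else b) with hg
  have hgY : ∀ b ω, g b (Y ω) = φ (Function.update (vec ω) i b) := by
    intro b ω
    simp only [hg]
    congr 1
    funext k
    by_cases hk : k = i
    · subst hk
      simp
    · have hk' : k ∈ ({i}ᶜ : Finset (Fin n)) := by simp [hk]
      simp [hk', Function.update_of_ne hk, hY, hvec]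
  have hgmeas : ∀ b, Measurable (g b) := by
    intro b
    have h1 : Measurable fun (v : ({i}ᶜ : Finset (Fin n)) → ℝ) (k : Fin n) =>
        if h : k ∈ ({i}ᶜ : Finset (Fin n)) then decide (t < v ⟨k, h⟩) else b := by
      apply measurable_pi_lambda
      intro k
      by_cases h : k ∈ ({i}ᶜ : Finset (Fin n))
      · simp only [h, dif_pos]
        exact hdec.comp (measurable_pi_apply _)
      · simp only [h, dif_neg, not_false_iff]
        exact measurable_const
    exact (measurable_of_countable φ).comp h1
  have hH0eq : H0 = Y ⁻¹' {v | g false v = true} := by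
    ext ω; simp only [hH0, Set.mem_setOf_eq, Set.mem_preimage, hgY]
  have hDeq : D = Y ⁻¹' {v | g true v = true ∧ g false v = false} := by
    ext ω; simp only [hD, Set.mem_setOf_eq, Set.mem_preimage, hgY]
  have hSmeas : MeasurableSet {v | g false v = true} :=
    (hgmeas false) (by exact MeasurableSet.singleton true : MeasurableSet {true})
  have hSmeas2 : MeasurableSet {v | g true v = true ∧ g false v = false} := by
    have : {v | g true v = true ∧ g false v = false}
        = (g true) ⁻¹' {true} ∩ (g false) ⁻¹' {false} := by
      ext v; simp
    rw [this]
    exact ((hgmeas true) (MeasurableSet.singleton true)).inter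
      ((hgmeas false) (MeasurableSet.singleton false))
  have hYmeas : Measurable Y := measurable_pi_lambda _ fun j => hmeas j
  have hXmeas : Measurable X := measurable_pi_lambda _ fun j => hmeas j
  have hH0meas : MeasurableSet H0 := by rw [hH0eq]; exact hYmeas hSmeas
  have hDmeas : MeasurableSet D := by rw [hDeq]; exact hYmeas hSmeas2
  have hApre : ∀ s : ℝ, A s = X ⁻¹' ((fun v => v ⟨i, Finset.mem_singleton_self i⟩) ⁻¹' Set.Ioi s) := by
    intro s; rfl
  have hprod : ∀ s : ℝ, ∀ S2 : Set (({i}ᶜ : Finset (Fin n)) → ℝ), MeasurableSet S2 →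
      μ (A s ∩ Y ⁻¹' S2) = μ (A s) * μ (Y ⁻¹' S2) := by
    intro s S2 hS2
    rw [hApre s]
    exact hIF.measure_inter_preimage_eq_mul _ _ ((measurable_pi_apply _) measurableSet_Ioi) hS2
  -- integral helpers
  have hint : ∀ E : Set Ω, MeasurableSet E →
      ∫ ω, Set.indicator E (fun _ => (1:ℝ)) ω ∂μ = (μ E).toReal := by
    intro E hE
    rw [integral_indicator_const (1:ℝ) hE]
    simp
    rfl
  have hintg : ∀ E : Set Ω, MeasurableSet E →
      Integrable (Set.indicator E (fun _ => (1:ℝ))) μ :=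
    fun E hE => (integrable_const 1).indicator hE
  have hfs : ∀ s, ind (T i) s = Set.indicator (A s) (fun _ => (1:ℝ)) := by
    intro s; funext ω; simp [ind, Set.indicator_apply, hA, Set.mem_setOf_eq]
  have hupdle : ∀ x : Fin n → Bool,
      φ (Function.update x i false) = true → φ (Function.update x i true) = true := by
    intro x hx
    have hle : φ (Function.update x i false) ≤ φ (Function.update x i true) := by
      apply hφ.1; intro k; by_cases hk : k = i
      · subst hk; simp
      · simp [Function.update_of_ne hk]
    rw [hx] at hle
    cases hb : φ (Function.update x i true)
    · rw [hb] at hle; exact absurd hle (by decide)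
    · rfl
  have hG : ind (fun ω => tau φ fun k => T k ω) t =
      fun ω => Set.indicator H0 (fun _ => (1:ℝ)) ω + Set.indicator (A t ∩ D) (fun _ => (1:ℝ)) ω := by
    funext ω
    have htau : (t < tau φ fun k => T k ω) ↔ φ (vec ω) = true :=
      tau_gt φ hφ i _ (fun k => hnn k ω) t ht
    have hself : Function.update (vec ω) i (vec ω i) = vec ω := Function.update_eq_self i (vec ω)
    by_cases hQ : t < T i ω
    · have hvi : vec ω i = true := by simp [hvec, hQ]
      have hveq : φ (vec ω) = φ (Function.update (vec ω) i true) := by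
        conv_lhs => rw [← hself, hvi]
      by_cases h1 : φ (Function.update (vec ω) i true) = true
      · by_cases h0 : φ (Function.update (vec ω) i false) = true
        · simp [ind, Set.indicator_apply, Set.mem_inter_iff, hH0, hD, hA, Set.mem_setOf_eq,
            htau, hveq, h1, h0, hQ]
        · simp only [Bool.not_eq_true] at h0
          simp [ind, Set.indicator_apply, Set.mem_inter_iff, hH0, hD, hA, Set.mem_setOf_eq,
            htau, hveq, h1, h0, hQ]
      · have h0 : ¬ φ (Function.update (vec ω) i false) = true :=
          fun hc => h1 (hupdle (vec ω) hc)
        simp only [Bool.not_eq_true] at h1 h0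
        simp [ind, Set.indicator_apply, Set.mem_inter_iff, hH0, hD, hA, Set.mem_setOf_eq,
          htau, hveq, h1, h0, hQ]
    · have hvi : vec ω i = false := by simp [hvec, hQ]
      have hveq : φ (vec ω) = φ (Function.update (vec ω) i false) := by
        conv_lhs => rw [← hself, hvi]
      by_cases h0 : φ (Function.update (vec ω) i false) = true
      · simp [ind, Set.indicator_apply, Set.mem_inter_iff, hH0, hD, hA, Set.mem_setOf_eq,
          htau, hveq, h0, hQ]
      · simp only [Bool.not_eq_true] at h0
        simp [ind, Set.indicator_apply, Set.mem_inter_iff, hH0, hD, hA, Set.mem_setOf_eq,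
          htau, hveq, h0, hQ]
  have hmul : ∀ (s : ℝ), (fun ω => ind (T i) s ω *
        (Set.indicator H0 (fun _ => (1:ℝ)) ω + Set.indicator (A t ∩ D) (fun _ => (1:ℝ)) ω))
      = fun ω => Set.indicator (A s ∩ H0) (fun _ => (1:ℝ)) ω
        + Set.indicator (A (max s t) ∩ D) (fun _ => (1:ℝ)) ω := by
    intro s
    funext ω
    simp only [ind, Set.indicator_apply, Set.mem_inter_iff, hA, Set.mem_setOf_eq, max_lt_iff]
    by_cases h1 : s < T i ω <;> by_cases h2 : t < T i ω <;>
      by_cases h3 : ω ∈ H0 <;> by_cases h4 : ω ∈ D <;>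
      simp [h1, h2, h3, h4]
  refine ⟨(μ D).toReal, ENNReal.toReal_nonneg, ?_, ?_⟩
  · have h1 : μ D ≤ 1 := prob_le_one
    simpa using ENNReal.toReal_mono ENNReal.one_ne_top h1
  intro s
  have e1 : ∫ ω, ind (T i) s ω * ind (fun ω => tau φ fun k => T k ω) t ω ∂μ
      = (μ (A s ∩ H0)).toReal + (μ (A (max s t) ∩ D)).toReal := by
    simp only [hG]
    rw [hmul s]
    rw [integral_add (hintg _ ((hAmeas s).inter hH0meas)) (hintg _ ((hAmeas _).inter hDmeas)),
      hint _ ((hAmeas s).inter hH0meas), hint _ ((hAmeas _).inter hDmeas)]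
  have e2 : ∀ u : ℝ, ∫ ω, ind (T i) u ω ∂μ = (μ (A u)).toReal := by
    intro u; rw [hfs]; exact hint _ (hAmeas u)
  have e3 : ∫ ω, ind (fun ω => tau φ fun k => T k ω) t ω ∂μ
      = (μ H0).toReal + (μ (A t ∩ D)).toReal := by
    simp only [hG]
    rw [integral_add (hintg _ hH0meas) (hintg _ ((hAmeas t).inter hDmeas)),
      hint _ hH0meas, hint _ ((hAmeas t).inter hDmeas)]
  have p1 : μ (A s ∩ H0) = μ (A s) * μ H0 := by rw [hH0eq]; exact hprod s _ hSmeas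
  have p2 : μ (A (max s t) ∩ D) = μ (A (max s t)) * μ D := by
    rw [hDeq]; exact hprod _ _ hSmeas2
  have p3 : μ (A t ∩ D) = μ (A t) * μ D := by rw [hDeq]; exact hprod _ _ hSmeas2
  have hfin : ∀ E : Set Ω, μ E ≠ ⊤ := fun E => measure_ne_top μ E
  simp only [cov]
  rw [e1, e2 s, e3, p1, p2, p3, ENNReal.toReal_mul, ENNReal.toReal_mul, ENNReal.toReal_mul]
  have hAs : ∀ u : ℝ, (μ (A u)).toReal = (μ {ω | u < T i ω}).toReal := fun u => rfl
  simp only [hA]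
  ring

/-- For each fixed t ≥ 0, s ↦ Cov(1_{T_i>s}, 1_{T>t}) is maximized at s = t; hence
the double supremum over s,t ≥ 0 equals the supremum over the diagonal. -/
theorem stmt18 {Ω : Type*} [MeasurableSpace Ω] (μ : Measure Ω) [IsProbabilityMeasure μ]
    {n : ℕ} (T : Fin n → Ω → ℝ) (hmeas : ∀ i, Measurable (T i))
    (hnn : ∀ i ω, 0 ≤ T i ω)
    (hindep : iIndepFun T μ)
    (φ : (Fin n → Bool) → Bool) (hφ : Coherent φ) (i : Fin n) :
    (∀ t : ℝ, 0 ≤ t → ∀ s : ℝ, 0 ≤ s →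
      cov μ (ind (T i) s) (ind (fun ω => tau φ fun k => T k ω) t) ≤
        cov μ (ind (T i) t) (ind (fun ω => tau φ fun k => T k ω) t)) ∧
    sSup {c : ℝ | ∃ s, 0 ≤ s ∧ ∃ t, 0 ≤ t ∧
        c = cov μ (ind (T i) s) (ind (fun ω => tau φ fun k => T k ω) t)} =
      sSup {c : ℝ | ∃ t, 0 ≤ t ∧
        c = cov μ (ind (T i) t) (ind (fun ω => tau φ fun k => T k ω) t)} := by
  have ha0 : ∀ s : ℝ, 0 ≤ (μ {ω | s < T i ω}).toReal := fun s => ENNReal.toReal_nonneg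
  have ha1 : ∀ s : ℝ, (μ {ω | s < T i ω}).toReal ≤ 1 := by
    intro s
    have h1 : μ {ω | s < T i ω} ≤ 1 := prob_le_one
    simpa using ENNReal.toReal_mono ENNReal.one_ne_top h1
  have hanti : ∀ s u : ℝ, s ≤ u →
      (μ {ω | u < T i ω}).toReal ≤ (μ {ω | s < T i ω}).toReal := by
    intro s u hsu
    apply ENNReal.toReal_mono (measure_ne_top μ _)
    apply measure_mono
    intro ω hω
    exact lt_of_le_of_lt hsu hω
  have part1 : ∀ t : ℝ, 0 ≤ t → ∀ s : ℝ, 0 ≤ s →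
      cov μ (ind (T i) s) (ind (fun ω => tau φ fun k => T k ω) t) ≤
        cov μ (ind (T i) t) (ind (fun ω => tau φ fun k => T k ω) t) := by
    intro t ht s hs
    obtain ⟨d, hd0, hd1, hf⟩ := key_cov μ T hmeas hnn hindep φ hφ i t ht
    rw [hf s, hf t]
    simp only [max_self]
    rcases le_total s t with h | h
    · rw [max_eq_right h]
      have h2 := hanti s t h
      nlinarith [mul_nonneg (mul_nonneg hd0 (ha0 t)) (sub_nonneg.mpr h2)]
    · rw [max_eq_left h]
      have h2 := hanti t s h
      nlinarith [mul_nonneg (mul_nonneg hd0 (sub_nonneg.mpr h2)) (sub_nonneg.mpr (ha1 t))]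
  refine ⟨part1, ?_⟩
  have hSd_sub : {c : ℝ | ∃ t, 0 ≤ t ∧
        c = cov μ (ind (T i) t) (ind (fun ω => tau φ fun k => T k ω) t)} ⊆
      {c : ℝ | ∃ s, 0 ≤ s ∧ ∃ t, 0 ≤ t ∧
        c = cov μ (ind (T i) s) (ind (fun ω => tau φ fun k => T k ω) t)} := by
    rintro c ⟨t, ht, rfl⟩
    exact ⟨t, ht, t, ht, rfl⟩
  have hSf_ne : {c : ℝ | ∃ s, 0 ≤ s ∧ ∃ t, 0 ≤ t ∧
        c = cov μ (ind (T i) s) (ind (fun ω => tau φ fun k => T k ω) t)}.Nonempty :=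
    ⟨_, 0, le_refl 0, 0, le_refl 0, rfl⟩
  have hSd_ne : {c : ℝ | ∃ t, 0 ≤ t ∧
        c = cov μ (ind (T i) t) (ind (fun ω => tau φ fun k => T k ω) t)}.Nonempty :=
    ⟨_, 0, le_refl 0, rfl⟩
  have hSf_bdd : BddAbove {c : ℝ | ∃ s, 0 ≤ s ∧ ∃ t, 0 ≤ t ∧
        c = cov μ (ind (T i) s) (ind (fun ω => tau φ fun k => T k ω) t)} := by
    refine ⟨1, ?_⟩
    rintro c ⟨s, hs, t, ht, rfl⟩
    obtain ⟨d, hd0, hd1, hf⟩ := key_cov μ T hmeas hnn hindep φ hφ i t ht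
    rw [hf s]
    nlinarith [mul_nonneg (mul_nonneg hd0 (ha0 s)) (ha0 t),
      mul_le_one₀ hd1 (ha0 (max s t)) (ha1 (max s t))]
  have hSd_bdd : BddAbove {c : ℝ | ∃ t, 0 ≤ t ∧
        c = cov μ (ind (T i) t) (ind (fun ω => tau φ fun k => T k ω) t)} :=
    hSf_bdd.mono hSd_sub
  apply le_antisymm
  · apply csSup_le hSf_ne
    rintro c ⟨s, hs, t, ht, rfl⟩
    exact le_trans (part1 t ht s hs) (le_csSup hSd_bdd ⟨t, ht, rfl⟩)
  · exact csSup_le_csSup hSf_bdd hSd_ne hSd_sub
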